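/- Let q > 1 be a real number and let α₁, α₂, α₃ be complex numbers such that q^(α_i) ≠ 1 and Re(α_i) < 1 for i = 1, 2, 3, and q^(α₁+α₂+α₃) = q. Then ((q−1)/q)·(1/(q^(α₁)−1) + 1/(q^(α₂)−1) + 1/(q^(α₃)−1)) + (q−2)/q ≠ 0. -/

import Mathlib

/-!
STATEMENT 9. For a real `q > 1` and complex `α₁, α₂, α₃` with `q^(α_i) ≠ 1` and
`Re(α_i) < 1` for `i = 1,2,3`, and `q^(α₁+α₂+α₃) = q`:
`((q-1)/q)·(1/(q^(α₁)-1) + 1/(q^(α₂)-1) + 1/(q^(α₃)-1)) + (q-2)/q ≠ 0`.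
Here `q^z` is the complex power `exp(z · log q)`.
-/

theorem statement9 (q : ℝ) (hq : 1 < q) (α₁ α₂ α₃ : ℂ)
    (h1 : (q : ℂ) ^ α₁ ≠ 1) (h2 : (q : ℂ) ^ α₂ ≠ 1) (h3 : (q : ℂ) ^ α₃ ≠ 1)
    (hre1 : α₁.re < 1) (hre2 : α₂.re < 1) (hre3 : α₃.re < 1)
    (hsum : (q : ℂ) ^ (α₁ + α₂ + α₃) = (q : ℂ)) :
    ((q : ℂ) - 1) / (q : ℂ) *
        (1 / ((q : ℂ) ^ α₁ - 1) + 1 / ((q : ℂ) ^ α₂ - 1) + 1 / ((q : ℂ) ^ α₃ - 1)) +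
      ((q : ℂ) - 2) / (q : ℂ) ≠ 0 := by
  have hqpos : (0:ℝ) < q := lt_trans one_pos hq
  have hq0 : (q : ℂ) ≠ 0 := by
    exact_mod_cast ne_of_gt hqpos
  set t₁ := (q : ℂ) ^ α₁ with ht₁
  set t₂ := (q : ℂ) ^ α₂ with ht₂
  set t₃ := (q : ℂ) ^ α₃ with ht₃
  have hprod : t₁ * t₂ * t₃ = (q : ℂ) := by
    rw [ht₁, ht₂, ht₃, ← Complex.cpow_add _ _ hq0, ← Complex.cpow_add _ _ hq0]
    exact hsum
  have habs : ∀ α : ℂ, α.re < 1 → ‖(q : ℂ) ^ α‖ < q := by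
    intro α hα
    rw [Complex.norm_cpow_eq_rpow_re_of_pos hqpos]
    calc q ^ α.re < q ^ (1:ℝ) := Real.rpow_lt_rpow_left_iff hq |>.mpr hα
    _ = q := Real.rpow_one q
  have hne : ∀ α : ℂ, α.re < 1 → (q : ℂ) ^ α ≠ (q : ℂ) := by
    intro α hα h
    have := habs α hα
    rw [h, Complex.norm_real, Real.norm_eq_abs, abs_of_pos hqpos] at this
    exact lt_irrefl _ this
  have hne1 : t₁ ≠ (q : ℂ) := hne α₁ hre1
  have hne2 : t₂ ≠ (q : ℂ) := hne α₂ hre2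
  have hne3 : t₃ ≠ (q : ℂ) := hne α₃ hre3
  have hd1 : t₁ - 1 ≠ 0 := sub_ne_zero.mpr h1
  have hd2 : t₂ - 1 ≠ 0 := sub_ne_zero.mpr h2
  have hd3 : t₃ - 1 ≠ 0 := sub_ne_zero.mpr h3
  intro hX
  have key : ((q : ℂ) - t₁) * ((q : ℂ) - t₂) * ((q : ℂ) - t₃) = 0 := by
    field_simp at hX
    linear_combination (q:ℂ) * hX - ((q:ℂ) - 1)^2 * hprod
  rcases mul_eq_zero.mp key with h | h
  · rcases mul_eq_zero.mp h with h | h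
    · exact hne1 (sub_eq_zero.mp h).symm
    · exact hne2 (sub_eq_zero.mp h).symm
  · exact hne3 (sub_eq_zero.mp h).symm
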